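/- Suppose P(a,I,J,K) is nonempty and b ∈ F_a, the smallest face of the derived arrangement δA_o containing a. Then P(b,I,J,K) is nonempty, and P(a,I,J,K) is bounded if and only if P(b,I,J,K) is bounded. -/

import Mathlib

open RealInnerProductSpace

noncomputable section

/-- `ℝ^n` with the Euclidean inner product. -/
abbrev Euc (n : ℕ) := EuclideanSpace ℝ (Fin n)

/-- Standard scalar product on `ℝ^m` (as tuples). -/
def dotm {m : ℕ} (c a : Fin m → ℝ) : ℝ := ∑ i, c i * a i

/-- `C` is a circuit: the family `{u i : i ∈ C}` is linearly dependent but every proper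
subfamily is linearly independent. -/
def IsCircuit {n m : ℕ} (u : Fin m → Euc n) (C : Set (Fin m)) : Prop :=
  ¬ LinearIndependent ℝ (fun i : C => u i) ∧
    ∀ D : Set (Fin m), D ⊂ C → LinearIndependent ℝ (fun i : D => u i)

/-- `c` is a circuit vector: `∑ i, c i • u i = 0` and the support of `c` is a circuit. -/
def IsCircuitVector {n m : ℕ} (u : Fin m → Euc n) (c : Fin m → ℝ) : Prop :=
  (∑ i, c i • u i) = 0 ∧ IsCircuit u {i | c i ≠ 0}

/-- `a` and `b` lie in the same open face of the derived arrangement `δA_o`: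
for every circuit vector `c`, `⟨c,a⟩` and `⟨c,b⟩` have the same sign. -/
def SameOpenFace {n m : ℕ} (u : Fin m → Euc n) (a b : Fin m → ℝ) : Prop :=
  ∀ c : Fin m → ℝ, IsCircuitVector u c →
    SignType.sign (dotm c a) = SignType.sign (dotm c b)

/-- `I, J, K` is a partition of `{1,…,m}` into pairwise disjoint (possibly empty) sets. -/
def IsTripartition {m : ℕ} (I J K : Set (Fin m)) : Prop :=
  I ∪ J ∪ K = Set.univ ∧ Disjoint I J ∧ Disjoint I K ∧ Disjoint J K

/-- The convex polyhedron `P(a,I,J,K)`. -/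
def poly {n m : ℕ} (u : Fin m → Euc n) (a : Fin m → ℝ) (I J K : Set (Fin m)) :
    Set (Euc n) :=
  {x | (∀ i ∈ I, ⟪u i, x⟫ = a i) ∧ (∀ j ∈ J, ⟪u j, x⟫ ≤ a j) ∧ (∀ k ∈ K, a k ≤ ⟪u k, x⟫)}

/-- The normal cone of `P` at `x`. -/
def normalCone {n : ℕ} (P : Set (Euc n)) (x : Euc n) : Set (Euc n) :=
  {v | ∀ y ∈ P, ⟪v, y⟫ ≤ ⟪v, x⟫}

/-- The normal fan of `P`: the family of normal cones at points of `P`. -/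
def normalFan {n : ℕ} (P : Set (Euc n)) : Set (Set (Euc n)) :=
  {N | ∃ x ∈ P, N = normalCone P x}

/-- A face of a convex polyhedron: the empty set or an exposed face. -/
def IsFace {n : ℕ} (P F : Set (Euc n)) : Prop :=
  F = ∅ ∨ ∃ v : Euc n, F = {x ∈ P | ∀ y ∈ P, ⟪v, y⟫ ≤ ⟪v, x⟫}

/-- The set of sign vectors of the parallel translation `A_a`. -/
def signSet {n m : ℕ} (u : Fin m → Euc n) (a : Fin m → ℝ) : Set (Fin m → SignType) :=
  {s | ∃ x : Euc n, ∀ i, s i = SignType.sign (⟪u i, x⟫ - a i)}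

/-- `b` belongs to `F_a`, the smallest face of the derived arrangement containing `a`. -/
def MemMinFace {n m : ℕ} (u : Fin m → Euc n) (a b : Fin m → ℝ) : Prop :=
  ∀ c : Fin m → ℝ, IsCircuitVector u c →
    (dotm c a = 0 → dotm c b = 0) ∧ (0 < dotm c a → 0 ≤ dotm c b) ∧
    (dotm c a < 0 → dotm c b ≤ 0)

namespace AuxPoly

/-- Sum over a set subtype equals full sum when the function vanishes off the set. -/
lemma set_sum_eq {ι V : Type*} [Fintype ι] [AddCommMonoid V] (f : ι → V) (S : Set ι)
    [Fintype S] (h : ∀ i ∉ S, f i = 0) : (∑ i : S, f i) = ∑ i, f i := by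
  classical
  rw [Finset.sum_set_coe (f := f) (s := S)]
  exact Finset.sum_subset (Finset.subset_univ _) (by
    intro i _ hi
    exact h i (by simpa using hi))

/-- Conformal subtraction: subtracting `r • g` from `c` kills one coordinate of the
support of `c` while keeping all coordinates weakly on the same side as `c`. -/
lemma conformal_sub {ι : Type*} [Fintype ι] (c g : ι → ℝ)
    (hsupp : ∀ i, c i = 0 → g i = 0) (hpos : ∃ i, 0 < g i * c i) :
    ∃ r : ℝ, 0 < r ∧ (∃ i1, c i1 ≠ 0 ∧ c i1 - r * g i1 = 0) ∧
      (∀ i, 0 ≤ (c i - r * g i) * c i) ∧ (∀ i, c i = 0 → c i - r * g i = 0) := by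
  classical
  set T : Finset ι := Finset.univ.filter (fun i => 0 < g i * c i) with hT
  obtain ⟨i0, hi0⟩ := hpos
  have hTne : T.Nonempty := ⟨i0, Finset.mem_filter.2 ⟨Finset.mem_univ _, hi0⟩⟩
  set r : ℝ := T.inf' hTne (fun i => c i / g i) with hr
  have hmemT : ∀ i ∈ T, 0 < g i * c i := by intro i hi; simpa [hT] using hi
  have hratio : ∀ i ∈ T, 0 < c i / g i := by
    intro i hi
    rcases mul_pos_iff.1 (hmemT i hi) with ⟨h1, h2⟩ | ⟨h1, h2⟩
    · exact div_pos h2 h1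
    · exact div_pos_of_neg_of_neg h2 h1
  have hrpos : 0 < r := by
    rw [hr, Finset.lt_inf'_iff]
    exact hratio
  have hrle : ∀ i ∈ T, r ≤ c i / g i := fun i hi => Finset.inf'_le _ hi
  obtain ⟨i1, hi1T, hi1⟩ := Finset.exists_mem_eq_inf' hTne (fun i => c i / g i)
  have hg1 : g i1 ≠ 0 := by
    intro h
    have := hmemT i1 hi1T
    rw [h] at this; simp at this
  refine ⟨r, hrpos, ⟨i1, ?_, ?_⟩, ?_, ?_⟩
  · intro h
    have := hmemT i1 hi1T
    rw [h] at this; simp at this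
  · rw [hr, hi1, div_mul_cancel₀ _ hg1]; ring
  · intro i
    by_cases hi : i ∈ T
    · have h1 : 0 < g i * c i := hmemT i hi
      have h2 : r ≤ c i / g i := hrle i hi
      have hgi : g i ≠ 0 := fun h => by rw [h] at h1; simp at h1
      have key : r * (g i * c i) ≤ (c i / g i) * (g i * c i) :=
        mul_le_mul_of_nonneg_right h2 h1.le
      have : (c i / g i) * (g i * c i) = c i * c i := by field_simp
      nlinarith
    · have h1 : g i * c i ≤ 0 := by
        by_contra h
        exact hi (by simp [hT]; linarith)
      nlinarith [sq_nonneg (c i), mul_nonneg hrpos.le (neg_nonneg.2 h1)]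
  · intro i hci
    simp [hci, hsupp i hci]

/-- sign transfer along conformality -/
lemma conf_sign {ι : Type*} (c d : ι → ℝ) (h1 : ∀ i, 0 ≤ d i * c i)
    (h2 : ∀ i, c i = 0 → d i = 0) (i : ι) :
    (0 ≤ c i → 0 ≤ d i) ∧ (c i ≤ 0 → d i ≤ 0) := by
  rcases eq_or_ne (c i) 0 with h | h
  · simp [h2 i h]
  · constructor
    · intro hc
      have hc' : 0 < c i := lt_of_le_of_ne hc (Ne.symm h)
      nlinarith [h1 i]
    · intro hc
      have hc' : c i < 0 := lt_of_le_of_ne hc h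
      nlinarith [h1 i]

/-- Extract a linear relation supported in `S` from non-linear-independence. -/
lemma extract_rel {ι V : Type*} [Fintype ι] [AddCommGroup V] [Module ℝ V] (g : ι → V)
    (S : Set ι) (h : ¬ LinearIndependent ℝ (fun i : S => g i)) :
    ∃ d : ι → ℝ, (∑ i, d i • g i) = 0 ∧ (∀ i, i ∉ S → d i = 0) ∧ ∃ i, d i ≠ 0 := by
  classical
  haveI : Fintype S := Set.Finite.fintype (Set.toFinite S)
  obtain ⟨d0, hsum, i0, hi0⟩ := Fintype.not_linearIndependent_iff.1 h
  refine ⟨fun i => if h : i ∈ S then d0 ⟨i, h⟩ else 0, ?_, ?_, ⟨i0, by simp [i0.2, hi0]⟩⟩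
  · rw [← set_sum_eq (fun i => (if h : i ∈ S then d0 ⟨i, h⟩ else 0) • g i) S
      (by intro i hi; simp [hi])]
    rw [← hsum]
    exact Finset.sum_congr rfl fun i _ => by simp [i.2]
  · intro i hi; simp [hi]

/-- Converse: a relation supported in `S` shows non-independence. -/
lemma not_li_of_rel {ι V : Type*} [Fintype ι] [AddCommGroup V] [Module ℝ V] (g : ι → V)
    (S : Set ι) (d : ι → ℝ) (hsum : (∑ i, d i • g i) = 0) (hd : ∀ i, i ∉ S → d i = 0)
    (hne : ∃ i ∈ S, d i ≠ 0) : ¬ LinearIndependent ℝ (fun i : S => g i) := by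
  classical
  haveI : Fintype S := Set.Finite.fintype (Set.toFinite S)
  rw [Fintype.not_linearIndependent_iff]
  obtain ⟨i0, hi0S, hi0⟩ := hne
  refine ⟨fun i => d i, ?_, ⟨⟨i0, hi0S⟩, hi0⟩⟩
  rw [set_sum_eq (fun i => d i • g i) S (by intro i hi; simp [hd i hi])]
  exact hsum


section DualSide

/-- The key dual inequality. -/
lemma dual_nonneg {n m : ℕ} (u : Fin m → Euc n) {a b : Fin m → ℝ} (hb : MemMinFace u a b)
    {I J K : Set (Fin m)} (hIJK : IsTripartition I J K) {x : Euc n}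
    (hx : x ∈ poly u a I J K) :
    ∀ c : Fin m → ℝ, (∑ i, c i • u i) = 0 → (∀ j ∈ J, 0 ≤ c j) → (∀ k ∈ K, c k ≤ 0) →
      0 ≤ dotm c b := by
  classical
  suffices H : ∀ N : ℕ, ∀ c : Fin m → ℝ,
      (Finset.univ.filter (fun i => c i ≠ 0)).card ≤ N →
      (∑ i, c i • u i) = 0 → (∀ j ∈ J, 0 ≤ c j) → (∀ k ∈ K, c k ≤ 0) → 0 ≤ dotm c b by
    intro c h1 h2 h3; exact H _ c le_rfl h1 h2 h3
  intro N
  induction N with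
  | zero =>
    intro c hcard h1 h2 h3
    have hc : ∀ i, c i = 0 := by
      intro i; by_contra h
      have hmem : i ∈ Finset.univ.filter (fun i => c i ≠ 0) := by simp [h]
      have := Finset.card_pos.2 ⟨i, hmem⟩; omega
    simp [dotm, hc]
  | succ N ih =>
    intro c hcard h1 h2 h3
    by_cases hc0 : ∀ i, c i = 0
    · simp [dotm, hc0]
    push_neg at hc0
    by_cases hf : ∃ f : Fin m → ℝ, (∑ i, f i • u i) = 0 ∧ (∀ i, c i = 0 → f i = 0) ∧
        (∀ i, 0 ≤ f i * c i) ∧ (∃ i0, c i0 ≠ 0 ∧ f i0 = 0) ∧ (∃ i, f i ≠ 0)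
    · obtain ⟨f, hfsum, hfsupp, hfconf, ⟨i0, hci0, hfi0⟩, iw, hfw⟩ := hf
      have hpos : ∃ i, 0 < f i * c i := by
        refine ⟨iw, lt_of_le_of_ne (hfconf iw) ?_⟩
        have hcw : c iw ≠ 0 := fun h => hfw (hfsupp iw h)
        exact (mul_ne_zero hfw hcw).symm
      obtain ⟨r, hr, ⟨i1, hci1, hi1⟩, hconf', hsupp'⟩ := conformal_sub c f hfsupp hpos
      set c' : Fin m → ℝ := fun i => c i - r * f i with hc'
      -- support of c' strictly smaller
      have hsubc' : Finset.univ.filter (fun i => c' i ≠ 0) ⊂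
          Finset.univ.filter (fun i => c i ≠ 0) := by
        constructor
        · intro i hi
          simp only [Finset.mem_filter, Finset.mem_univ, true_and] at hi ⊢
          intro h; exact hi (hsupp' i h)
        · intro hsub
          have := hsub (Finset.mem_filter.2 ⟨Finset.mem_univ _, hci1⟩)
          simp only [Finset.mem_filter, Finset.mem_univ, true_and] at this
          exact this hi1
      have hsubf : Finset.univ.filter (fun i => f i ≠ 0) ⊂
          Finset.univ.filter (fun i => c i ≠ 0) := by
        constructor
        · intro i hi
          simp only [Finset.mem_filter, Finset.mem_univ, true_and] at hi ⊢
          intro h; exact hi (hfsupp i h)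
        · intro hsub
          have := hsub (Finset.mem_filter.2 ⟨Finset.mem_univ _, hci0⟩)
          simp only [Finset.mem_filter, Finset.mem_univ, true_and] at this
          exact this hfi0
      have hcardc' : (Finset.univ.filter (fun i => c' i ≠ 0)).card ≤ N := by
        have := Finset.card_lt_card hsubc'; omega
      have hcardf : (Finset.univ.filter (fun i => f i ≠ 0)).card ≤ N := by
        have := Finset.card_lt_card hsubf; omega
      have hc'sum : (∑ i, c' i • u i) = 0 := by
        have : (∑ i, c' i • u i) = (∑ i, c i • u i) - r • (∑ i, f i • u i) := by
          rw [Finset.smul_sum, ← Finset.sum_sub_distrib]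
          exact Finset.sum_congr rfl fun i _ => by
            rw [hc']; simp [sub_smul, smul_smul]
        rw [this, h1, hfsum]; simp
      have h2' : ∀ j ∈ J, 0 ≤ c' j := fun j hj =>
        (conf_sign c c' hconf' hsupp' j).1 (h2 j hj)
      have h3' : ∀ k ∈ K, c' k ≤ 0 := fun k hk =>
        (conf_sign c c' hconf' hsupp' k).2 (h3 k hk)
      have h2f : ∀ j ∈ J, 0 ≤ f j := fun j hj =>
        (conf_sign c f hfconf hfsupp j).1 (h2 j hj)
      have h3f : ∀ k ∈ K, f k ≤ 0 := fun k hk =>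
        (conf_sign c f hfconf hfsupp k).2 (h3 k hk)
      have hsplit : dotm c b = dotm c' b + r * dotm f b := by
        simp only [dotm, hc', sub_mul, Finset.mul_sum]
        rw [← Finset.sum_add_distrib]
        exact Finset.sum_congr rfl fun i _ => by ring
      rw [hsplit]
      have hA := ih c' hcardc' hc'sum h2' h3'
      have hB := ih f hcardf hfsum h2f h3f
      nlinarith
    -- no conformal reduction exists: c is a circuit vector
    · push_neg at hf
      have hcirc : IsCircuitVector u c := by
        refine ⟨h1, ?_, ?_⟩
        · exact not_li_of_rel u {i | c i ≠ 0} c h1 (fun i hi => by simpa using hi)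
            ⟨hc0.choose, hc0.choose_spec, hc0.choose_spec⟩
        · intro D hD
          by_contra hnLI
          obtain ⟨d, hdsum, hdsupp, id0, hd0⟩ := extract_rel u D hnLI
          have hdsuppc : ∀ i, c i = 0 → d i = 0 := fun i hci =>
            hdsupp i (fun hiD => (hD.1 hiD) hci)
          obtain ⟨i2, hi2S, hi2D⟩ := Set.exists_of_ssubset hD
          have hci2 : c i2 ≠ 0 := hi2S
          have hdi2 : d i2 = 0 := hdsupp i2 hi2D
          by_cases hp : ∃ i, 0 < d i * c i
          · obtain ⟨r, hr, ⟨i1, hci1, hfi1⟩, hconf, hsuppz⟩ :=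
              conformal_sub c d hdsuppc hp
            have hsum' : (∑ i, (c i - r * d i) • u i) = 0 := by
              have : (∑ i, (c i - r * d i) • u i)
                  = (∑ i, c i • u i) - r • (∑ i, d i • u i) := by
                rw [Finset.smul_sum, ← Finset.sum_sub_distrib]
                exact Finset.sum_congr rfl fun i _ => by simp [sub_smul, smul_smul]
              rw [this, h1, hdsum]; simp
            have hz := hf (fun i => c i - r * d i) hsum' hsuppz hconf ⟨i1, hci1, hfi1⟩
            have := hz i2
            simp only [hdi2, mul_zero, sub_zero] at this
            exact hci2 this
          · push_neg at hp
            have hsum' : (∑ i, (fun i => -d i) i • u i) = 0 := by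
              simp only [neg_smul, Finset.sum_neg_distrib, hdsum, neg_zero]
            have hz := hf (fun i => -d i) hsum' (fun i hci => by simp [hdsuppc i hci])
              (fun i => by simpa using neg_nonneg.2 (hp i)) ⟨i2, hci2, by simp [hdi2]⟩
            have := hz id0
            simp only [neg_eq_zero] at this
            exact hd0 this
      -- easy Farkas at a
      obtain ⟨hxI, hxJ, hxK⟩ := hx
      have hzero : (∑ i, c i * ⟪u i, x⟫) = 0 := by
        have : (∑ i, c i * ⟪u i, x⟫) = ⟪∑ i, c i • u i, x⟫ := by
          rw [sum_inner]
          exact Finset.sum_congr rfl fun i _ => (real_inner_smul_left _ _ _).symm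
        rw [this, h1, inner_zero_left]
      have hca : 0 ≤ dotm c a := by
        have hterm : ∀ i, 0 ≤ c i * (a i - ⟪u i, x⟫) := by
          intro i
          have hiU : i ∈ I ∪ J ∪ K := by rw [hIJK.1]; trivial
          rcases hiU with hiIJ | hiK
          · rcases hiIJ with hiI | hiJ
            · rw [hxI i hiI]; simp
            · exact mul_nonneg (h2 i hiJ) (by linarith [hxJ i hiJ])
          · nlinarith [h3 i hiK, hxK i hiK]
        have hsplit2 : dotm c a = ∑ i, c i * (a i - ⟪u i, x⟫) := by
          rw [dotm,
            Finset.sum_congr rfl (fun i _ => show c i * a i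
              = c i * (a i - ⟪u i, x⟫) + c i * ⟪u i, x⟫ by ring),
            Finset.sum_add_distrib, hzero, add_zero]
        rw [hsplit2]
        exact Finset.sum_nonneg fun i _ => hterm i
      obtain ⟨hE, hP, _⟩ := hb c hcirc
      rcases eq_or_lt_of_le hca with h | h
      · exact le_of_eq (hE h.symm).symm
      · exact hP h

end DualSide

/-! ### Closedness of finitely generated cones -/

section FGCone

variable {V : Type*} [NormedAddCommGroup V] [NormedSpace ℝ V]

/-- conic Carathéodory -/
lemma carath {ι : Type*} [Fintype ι] (g : ι → V) :
    ∀ N : ℕ, ∀ t : ι → ℝ, (Finset.univ.filter (fun i => t i ≠ 0)).card ≤ N →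
      (∀ i, 0 ≤ t i) →
      ∃ S : Set ι, LinearIndependent ℝ (fun i : S => g i) ∧
        ∃ t' : ι → ℝ, (∀ i, 0 ≤ t' i) ∧ (∀ i ∉ S, t' i = 0) ∧
          (∑ i, t' i • g i) = ∑ i, t i • g i := by
  classical
  intro N
  induction N with
  | zero =>
    intro t hcard ht
    have hc : ∀ i, t i = 0 := by
      intro i; by_contra h
      have hmem : i ∈ Finset.univ.filter (fun i => t i ≠ 0) := by simp [h]
      have := Finset.card_pos.2 ⟨i, hmem⟩; omega
    refine ⟨∅, ?_, t, ht, fun i _ => hc i, rfl⟩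
    haveI : IsEmpty (↥(∅ : Set ι)) := by simp [Set.isEmpty_coe_sort]
    exact linearIndependent_empty_type
  | succ N ih =>
    intro t hcard ht
    set S : Set ι := {i | t i ≠ 0} with hS
    by_cases hLI : LinearIndependent ℝ (fun i : S => g i)
    · exact ⟨S, hLI, t, ht, fun i hi => by simpa [hS] using hi, rfl⟩
    · obtain ⟨d, hdsum, hdsupp, id0, hd0⟩ := extract_rel g S hLI
      have hdsuppc : ∀ i, t i = 0 → d i = 0 := fun i hti =>
        hdsupp i (by simp [hS, hti])
      -- make sure some product is positive (otherwise negate d)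
      have key : ∀ d : ι → ℝ, (∑ i, d i • g i) = 0 → (∀ i, t i = 0 → d i = 0) →
          (∃ i, 0 < d i * t i) →
          ∃ S : Set ι, LinearIndependent ℝ (fun i : S => g i) ∧
            ∃ t' : ι → ℝ, (∀ i, 0 ≤ t' i) ∧ (∀ i ∉ S, t' i = 0) ∧
              (∑ i, t' i • g i) = ∑ i, t i • g i := by
        intro d hdsum hdsuppc hp
        obtain ⟨r, hr, ⟨i1, hti1, hz1⟩, hconf, hsuppz⟩ := conformal_sub t d hdsuppc hp
        set t' : ι → ℝ := fun i => t i - r * d i with ht'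
        have ht'pos : ∀ i, 0 ≤ t' i := by
          intro i
          show 0 ≤ t i - r * d i
          rcases eq_or_ne (t i) 0 with h | h
          · linarith [hsuppz i h]
          · have h1 := hconf i
            have h2 : 0 < t i := lt_of_le_of_ne (ht i) (Ne.symm h)
            nlinarith
        have hsub : Finset.univ.filter (fun i => t' i ≠ 0) ⊂
            Finset.univ.filter (fun i => t i ≠ 0) := by
          constructor
          · intro i hi
            simp only [Finset.mem_filter, Finset.mem_univ, true_and] at hi ⊢
            intro h; exact hi (hsuppz i h)
          · intro hsub
            have := hsub (Finset.mem_filter.2 ⟨Finset.mem_univ _, hti1⟩)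
            simp only [Finset.mem_filter, Finset.mem_univ, true_and] at this
            exact this hz1
        have hcard' : (Finset.univ.filter (fun i => t' i ≠ 0)).card ≤ N := by
          have := Finset.card_lt_card hsub; omega
        obtain ⟨S', hLI', t'', h1, h2, h3⟩ := ih t' hcard' ht'pos
        refine ⟨S', hLI', t'', h1, h2, ?_⟩
        rw [h3]
        have : (∑ i, t' i • g i) = (∑ i, t i • g i) - r • (∑ i, d i • g i) := by
          rw [Finset.smul_sum, ← Finset.sum_sub_distrib]
          exact Finset.sum_congr rfl fun i _ => by rw [ht']; simp [sub_smul, smul_smul]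
        rw [this, hdsum]; simp
      by_cases hp : ∃ i, 0 < d i * t i
      · exact key d hdsum hdsuppc hp
      · push_neg at hp
        refine key (fun i => -d i) ?_ (fun i hti => by simp [hdsuppc i hti]) ?_
        · simp only [neg_smul, Finset.sum_neg_distrib, hdsum, neg_zero]
        · refine ⟨id0, ?_⟩
          have htid0 : t id0 ≠ 0 := fun h => hd0 (hdsuppc id0 h)
          have h1 : 0 < t id0 := lt_of_le_of_ne (ht id0) (Ne.symm htid0)
          have h2 : d id0 * t id0 ≤ 0 := hp id0
          have h3 : d id0 * t id0 ≠ 0 := mul_ne_zero hd0 htid0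
          simp only [neg_mul]
          cases lt_or_eq_of_le h2 with
          | inl h => linarith
          | inr h => exact absurd h h3

/-- the cone generated by an independent family, inside the subsets indexed version,
is closed. -/
lemma closed_piece [FiniteDimensional ℝ V] [T2Space V] {ι : Type*} [Fintype ι] (g : ι → V)
    (S : Set ι) (hs : LinearIndependent ℝ (fun i : S => g i)) :
    IsClosed {v : V | ∃ t : ι → ℝ, (∀ i, 0 ≤ t i) ∧ (∀ i ∉ S, t i = 0) ∧
      v = ∑ i, t i • g i} := by
  classical
  haveI : Fintype S := Set.Finite.fintype (Set.toFinite S)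
  set L : (S → ℝ) →ₗ[ℝ] V :=
    { toFun := fun t => ∑ i : S, t i • g i
      map_add' := by intro s t; simp [add_smul, Finset.sum_add_distrib]
      map_smul' := by intro r t; simp [smul_smul, Finset.smul_sum] } with hL
  have hinj : Function.Injective L := by
    rw [← LinearMap.ker_eq_bot, LinearMap.ker_eq_bot']
    intro t hLt
    funext i
    exact Fintype.linearIndependent_iff.1 hs t hLt i
  have hset : {v : V | ∃ t : ι → ℝ, (∀ i, 0 ≤ t i) ∧ (∀ i ∉ S, t i = 0) ∧
      v = ∑ i, t i • g i} = L '' {t | ∀ i, 0 ≤ t i} := by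
    ext v
    constructor
    · rintro ⟨t, ht0, htS, rfl⟩
      refine ⟨fun i => t i, fun i => ht0 i, ?_⟩
      rw [hL]
      simp only [LinearMap.coe_mk, AddHom.coe_mk]
      exact set_sum_eq (fun i => t i • g i) S (fun i hi => by simp [htS i hi])
    · rintro ⟨t, ht0, rfl⟩
      classical
      refine ⟨fun i => if h : i ∈ S then t ⟨i, h⟩ else 0, ?_, ?_, ?_⟩
      · intro i; by_cases h : i ∈ S <;> simp [h, ht0 _]
      · intro i hi; simp [hi]
      · rw [hL]
        simp only [LinearMap.coe_mk, AddHom.coe_mk]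
        rw [← set_sum_eq (fun i => (if h : i ∈ S then t ⟨i, h⟩ else 0) • g i) S
          (fun i hi => by simp [hi])]
        exact Finset.sum_congr rfl fun i _ => by simp [i.2]
  rw [hset]
  have hemb := LinearMap.isClosedEmbedding_of_injective (f := L)
    (LinearMap.ker_eq_bot.2 hinj)
  have horth : IsClosed {t : S → ℝ | ∀ i, 0 ≤ t i} := by
    have : {t : S → ℝ | ∀ i, 0 ≤ t i} = ⋂ i, {t : S → ℝ | 0 ≤ t i} := by
      ext t; simp [Set.mem_iInter]
    rw [this]
    exact isClosed_iInter fun i => isClosed_le continuous_const (continuous_apply i)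
  exact hemb.isClosedMap _ horth

lemma fg_closed [FiniteDimensional ℝ V] {ι : Type*} [Fintype ι] (g : ι → V) :
    IsClosed {v : V | ∃ t : ι → ℝ, (∀ i, 0 ≤ t i) ∧ v = ∑ i, t i • g i} := by
  classical
  have hset : {v : V | ∃ t : ι → ℝ, (∀ i, 0 ≤ t i) ∧ v = ∑ i, t i • g i} =
      ⋃ S : {S : Set ι // LinearIndependent ℝ (fun i : S => g i)},
        {v : V | ∃ t : ι → ℝ, (∀ i, 0 ≤ t i) ∧ (∀ i ∉ S.1, t i = 0) ∧
          v = ∑ i, t i • g i} := by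
    ext v
    simp only [Set.mem_setOf_eq, Set.mem_iUnion]
    constructor
    · rintro ⟨t, ht0, rfl⟩
      obtain ⟨S, hLI, t', h1, h2, h3⟩ := carath g _ t le_rfl ht0
      exact ⟨⟨S, hLI⟩, t', h1, h2, h3.symm⟩
    · rintro ⟨S, t, h1, _, h3⟩
      exact ⟨t, h1, h3⟩
  rw [hset]
  haveI : Finite {S : Set ι // LinearIndependent ℝ (fun i : S => g i)} := by
    infer_instance
  exact isClosed_iUnion_of_finite fun S => closed_piece g S.1 S.2

end FGCone


section ConeSide

variable {n m : ℕ}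

/-- The evaluation map `x ↦ (⟪u i, x⟫)_i` as a linear map. -/
def UL (u : Fin m → Euc n) : Euc n →ₗ[ℝ] EuclideanSpace ℝ (Fin m) where
  toFun x := WithLp.toLp 2 (fun i => ⟪u i, x⟫)
  map_add' x y := by
    ext i
    exact inner_add_right _ _ _
  map_smul' r x := by
    ext i
    exact real_inner_smul_right _ _ _

lemma UL_apply (u : Fin m → Euc n) (x : Euc n) (i : Fin m) : UL u x i = ⟪u i, x⟫ := rfl

open Classical in
/-- the sign pattern of the tripartition -/
def sgm (J K : Set (Fin m)) : Fin m → ℝ :=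
  fun i => if i ∈ J then 1 else if i ∈ K then -1 else 0

open Classical in
def gfam (u : Fin m → Euc n) (J K : Set (Fin m)) :
    ((Fin n ⊕ Fin n) ⊕ Fin m) → EuclideanSpace ℝ (Fin m) :=
  fun p => match p with
  | .inl (.inl l) => UL u (EuclideanSpace.single l 1)
  | .inl (.inr l) => -UL u (EuclideanSpace.single l 1)
  | .inr i => sgm J K i • EuclideanSpace.single i 1

def coneSet (u : Fin m → Euc n) (J K : Set (Fin m)) : Set (EuclideanSpace ℝ (Fin m)) :=
  {v | ∃ t : ((Fin n ⊕ Fin n) ⊕ Fin m) → ℝ, (∀ p, 0 ≤ t p) ∧ v = ∑ p, t p • gfam u J K p}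

lemma coneSet_closed (u : Fin m → Euc n) (J K : Set (Fin m)) :
    IsClosed (coneSet u J K) := fg_closed _

/-- coordinates of sums in EuclideanSpace -/
lemma apply_sum {N : ℕ} {ι : Type*} (s : Finset ι) (f : ι → EuclideanSpace ℝ (Fin N))
    (i : Fin N) : (∑ j ∈ s, f j) i = ∑ j ∈ s, f j i := by
  have h : ∀ w : EuclideanSpace ℝ (Fin N), w i = ⟪EuclideanSpace.single i (1 : ℝ), w⟫ := by
    intro w; rw [EuclideanSpace.inner_single_left]; simp
  calc (∑ j ∈ s, f j) i = ⟪EuclideanSpace.single i (1 : ℝ), ∑ j ∈ s, f j⟫ := h _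
    _ = ∑ j ∈ s, ⟪EuclideanSpace.single i (1 : ℝ), f j⟫ := inner_sum _ _ _
    _ = ∑ j ∈ s, f j i := Finset.sum_congr rfl fun j _ => (h (f j)).symm

lemma eq_sum_single (x : Euc n) :
    x = ∑ l, x l • (EuclideanSpace.single l 1 : Euc n) := by
  ext l
  rw [apply_sum]
  simp only [PiLp.smul_apply, EuclideanSpace.single_apply, smul_eq_mul]
  rw [Finset.sum_eq_single l]
  · simp
  · intro j _ hj; simp [Ne.symm hj]
  · intro h; exact absurd (Finset.mem_univ l) h

lemma sum_gfam (u : Fin m → Euc n) (J K : Set (Fin m))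
    (t : ((Fin n ⊕ Fin n) ⊕ Fin m) → ℝ) :
    ∑ p, t p • gfam u J K p =
      UL u (∑ l, (t (.inl (.inl l)) - t (.inl (.inr l))) • EuclideanSpace.single l 1) +
        ∑ i, (t (.inr i) * sgm J K i) • EuclideanSpace.single i 1 := by
  rw [Fintype.sum_sum_type, Fintype.sum_sum_type, map_sum]
  congr 1
  · rw [← Finset.sum_add_distrib]
    refine Finset.sum_congr rfl fun l _ => ?_
    rw [map_smul]
    show t (.inl (.inl l)) • UL u (EuclideanSpace.single l 1) +
        t (.inl (.inr l)) • (-UL u (EuclideanSpace.single l 1)) =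
      (t (.inl (.inl l)) - t (.inl (.inr l))) • UL u (EuclideanSpace.single l 1)
    rw [smul_neg, sub_smul]
    ring_nf
    abel
  · refine Finset.sum_congr rfl fun i _ => ?_
    show t (.inr i) • (sgm J K i • EuclideanSpace.single i 1) = _
    rw [smul_smul]

lemma mem_coneSet_iff {u : Fin m → Euc n} {J K : Set (Fin m)}
    {v : EuclideanSpace ℝ (Fin m)} :
    v ∈ coneSet u J K ↔ ∃ x : Euc n, ∃ s : Fin m → ℝ, (∀ i, 0 ≤ s i) ∧
      ∀ i, v i = ⟪u i, x⟫ + sgm J K i * s i := by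
  constructor
  · rintro ⟨t, ht0, rfl⟩
    refine ⟨∑ l, (t (.inl (.inl l)) - t (.inl (.inr l))) • EuclideanSpace.single l 1,
      fun i => t (.inr i), fun i => ht0 _, fun i => ?_⟩
    rw [sum_gfam]
    show (UL u _ + _) i = _
    rw [PiLp.add_apply, UL_apply, apply_sum]
    congr 1
    simp only [PiLp.smul_apply, EuclideanSpace.single_apply, smul_eq_mul]
    rw [Finset.sum_eq_single i]
    · simp [mul_comm]
    · intro j _ hj; simp [Ne.symm hj]
    · intro h; exact absurd (Finset.mem_univ i) h
  · rintro ⟨x, s, hs0, hv⟩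
    classical
    refine ⟨Sum.elim (Sum.elim (fun l => max (x l) 0) (fun l => max (-(x l)) 0)) s, ?_, ?_⟩
    · intro p; rcases p with (l | l) | i
      · simpa using le_max_right (x l) 0
      · simpa using le_max_right (-(x l)) 0
      · simpa using hs0 i
    · rw [sum_gfam]
      simp only [Sum.elim_inl, Sum.elim_inr]
      have hx : (∑ l, (max (x l) 0 - max (-(x l)) 0) • (EuclideanSpace.single l 1 : Euc n))
          = x := by
        conv_rhs => rw [eq_sum_single x]
        exact Finset.sum_congr rfl fun l _ => by
          rw [max_zero_sub_max_neg_zero_eq_self]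
      rw [hx]
      ext i
      rw [PiLp.add_apply, UL_apply, apply_sum]
      rw [hv i]
      congr 1
      · simp only [PiLp.smul_apply, EuclideanSpace.single_apply, smul_eq_mul]
        rw [Finset.sum_eq_single i]
        · simp [mul_comm]
        · intro j _ hj; simp [Ne.symm hj]
        · intro h; exact absurd (Finset.mem_univ i) h

lemma poly_nonempty_iff_mem {u : Fin m → Euc n} {v : Fin m → ℝ} {I J K : Set (Fin m)}
    (hIJK : IsTripartition I J K) :
    (poly u v I J K).Nonempty ↔ (WithLp.toLp 2 v : EuclideanSpace ℝ (Fin m)) ∈ coneSet u J K := by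
  classical
  obtain ⟨hU, hIJ, hIK, hJK⟩ := hIJK
  rw [mem_coneSet_iff]
  constructor
  · rintro ⟨x, hxI, hxJ, hxK⟩
    refine ⟨x, fun i => if i ∈ J then v i - ⟪u i, x⟫ else if i ∈ K then ⟪u i, x⟫ - v i
      else 0, fun i => ?_, fun i => ?_⟩
    · by_cases hJ : i ∈ J
      · simp only [hJ, if_true]; linarith [hxJ i hJ]
      · by_cases hK : i ∈ K
        · simp only [hJ, if_false, hK, if_true]; linarith [hxK i hK]
        · simp [hJ, hK]
    · by_cases hJ : i ∈ J
      · simp only [sgm, hJ, if_true, WithLp.ofLp_toLp]; ring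
      · by_cases hK : i ∈ K
        · simp only [sgm, hJ, if_false, hK, if_true, WithLp.ofLp_toLp]; ring
        · have hI : i ∈ I := by
            have : i ∈ I ∪ J ∪ K := by rw [hU]; trivial
            rcases this with (h | h) | h
            · exact h
            · exact absurd h hJ
            · exact absurd h hK
          simp only [sgm, hJ, if_false, hK, if_true, WithLp.ofLp_toLp]
          rw [hxI i hI]; ring
  · rintro ⟨x, s, hs0, hv⟩
    refine ⟨x, fun i hi => ?_, fun j hj => ?_, fun k hk => ?_⟩
    · have hJ : i ∉ J := fun h => (hIJ.ne_of_mem hi h) rfl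
      have hK : i ∉ K := fun h => (hIK.ne_of_mem hi h) rfl
      have := hv i
      simp only [sgm, hJ, if_false, hK, WithLp.ofLp_toLp] at this
      rw [this]; ring
    · have := hv j
      simp only [sgm, hj, if_true, WithLp.ofLp_toLp] at this
      rw [this]; linarith [hs0 j]
    · have hJ : k ∉ J := fun h => (hJK.ne_of_mem h hk) rfl
      have := hv k
      simp only [sgm, hJ, if_false, hk, if_true, WithLp.ofLp_toLp] at this
      rw [this]; linarith [hs0 k]

/-- the cone as a ConvexCone -/
def coneCC (u : Fin m → Euc n) (J K : Set (Fin m)) : ConvexCone ℝ (EuclideanSpace ℝ (Fin m)) where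
  carrier := coneSet u J K
  smul_mem' := by
    rintro c hc v ⟨t, ht0, rfl⟩
    refine ⟨fun p => c * t p, fun p => mul_nonneg hc.le (ht0 p), ?_⟩
    rw [Finset.smul_sum]
    exact Finset.sum_congr rfl fun p _ => by simp [smul_smul]
  add_mem' := by
    rintro v ⟨t, ht0, rfl⟩ w ⟨t', ht0', rfl⟩
    refine ⟨fun p => t p + t' p, fun p => add_nonneg (ht0 p) (ht0' p), ?_⟩
    rw [← Finset.sum_add_distrib]
    exact Finset.sum_congr rfl fun p _ => (add_smul _ _ _).symm

lemma farkas_primal (u : Fin m → Euc n) (v : Fin m → ℝ) {I J K : Set (Fin m)}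
    (hIJK : IsTripartition I J K)
    (hdual : ∀ c : Fin m → ℝ, (∑ i, c i • u i) = 0 → (∀ j ∈ J, 0 ≤ c j) →
      (∀ k ∈ K, c k ≤ 0) → 0 ≤ dotm c v) :
    (poly u v I J K).Nonempty := by
  classical
  rw [poly_nonempty_iff_mem hIJK]
  by_contra hvC
  obtain ⟨y, hy1, hy2⟩ := ProperCone.hyperplane_separation'
    (⟨(coneCC u J K).toPointedCone ⟨(fun p => 0), fun p => le_rfl, by simp⟩,
      coneSet_closed u J K⟩ : ProperCone ℝ (EuclideanSpace ℝ (Fin m))) hvC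
  -- y yields a dual vector violating hdual
  have hUx : ∀ x : Euc n, (0:ℝ) ≤ ⟪UL u x, y⟫ := by
    intro x
    refine hy1 (UL u x) (mem_coneSet_iff.2 ⟨x, fun _ => 0, fun i => le_rfl, fun i => by
      rw [UL_apply]; simp⟩)
  have hUzero : ∀ x : Euc n, ⟪UL u x, y⟫ = (0:ℝ) := by
    intro x
    have h1 := hUx x
    have h2 := hUx (-x)
    rw [map_neg, inner_neg_left] at h2
    linarith
  set c : Fin m → ℝ := fun i => y i with hc
  have hinner : ∀ w : EuclideanSpace ℝ (Fin m), ⟪w, y⟫ = ∑ i, w i * y i := by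
    intro w
    rw [PiLp.inner_apply]
    exact Finset.sum_congr rfl fun i _ => by rw [RCLike.inner_apply, conj_trivial, mul_comm]
  have hsum0 : (∑ i, c i • u i) = 0 := by
    have key : ∀ x : Euc n, ⟪(∑ i, c i • u i), x⟫ = (0:ℝ) := by
      intro x
      have h1 := hUzero x
      rw [hinner] at h1
      rw [sum_inner]
      rw [← h1]
      exact Finset.sum_congr rfl fun i _ => by
        rw [real_inner_smul_left, UL_apply, mul_comm]
    have := key (∑ i, c i • u i)
    exact inner_self_eq_zero.1 this
  have hJc : ∀ j ∈ J, 0 ≤ c j := by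
    intro j hj
    have hmem : (EuclideanSpace.single j (1:ℝ)) ∈ coneSet u J K := by
      refine mem_coneSet_iff.2 ⟨0, fun i => if i = j then 1 else 0,
        fun i => by positivity, fun i => ?_⟩
      rw [inner_zero_right, EuclideanSpace.single_apply]
      by_cases h : i = j
      · subst h; simp [sgm, hj]
      · simp [h]
    have := hy1 _ hmem
    rw [hinner] at this
    rw [Finset.sum_eq_single j] at this
    · simpa [EuclideanSpace.single_apply] using this
    · intro i _ hij; simp [EuclideanSpace.single_apply, hij]
    · intro h; exact absurd (Finset.mem_univ j) h
  have hKc : ∀ k ∈ K, c k ≤ 0 := by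
    intro k hk
    have hkJ : k ∉ J := fun h => (hIJK.2.2.2.ne_of_mem h hk) rfl
    have hmem : (-(EuclideanSpace.single k (1:ℝ))) ∈ coneSet u J K := by
      refine mem_coneSet_iff.2 ⟨0, fun i => if i = k then 1 else 0,
        fun i => by positivity, fun i => ?_⟩
      rw [inner_zero_right, PiLp.neg_apply, EuclideanSpace.single_apply]
      by_cases h : i = k
      · subst h; simp [sgm, hkJ, hk]
      · simp [h]
    have := hy1 _ hmem
    rw [hinner] at this
    rw [Finset.sum_eq_single k] at this
    · have h2 : (-(EuclideanSpace.single k (1:ℝ))) k = -1 := by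
        simp [EuclideanSpace.single_apply]
      rw [h2] at this; linarith
    · intro i _ hik; simp [EuclideanSpace.single_apply, hik]
    · intro h; exact absurd (Finset.mem_univ k) h
  have hd := hdual c hsum0 hJc hKc
  rw [hinner] at hy2
  have heq : dotm c v = ∑ i, (WithLp.toLp 2 v : EuclideanSpace ℝ (Fin m)) i * y i := by
    rw [dotm]
    exact Finset.sum_congr rfl fun i _ => mul_comm _ _
  rw [heq] at hd
  linarith

end ConeSide

section Bounded

open Filter Topology

lemma bounded_iff_rec {n m : ℕ} (u : Fin m → Euc n) (v : Fin m → ℝ) (I J K : Set (Fin m))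
    (hv : (poly u v I J K).Nonempty) :
    Bornology.IsBounded (poly u v I J K) ↔
      ∀ w : Euc n, (∀ i ∈ I, ⟪u i, w⟫ = 0) → (∀ j ∈ J, ⟪u j, w⟫ ≤ 0) →
        (∀ k ∈ K, 0 ≤ ⟪u k, w⟫) → w = 0 := by
  constructor
  · intro hbdd w h1 h2 h3
    by_contra hw
    obtain ⟨x0, hx0⟩ := hv
    have hmem : ∀ t : ℝ, 0 ≤ t → x0 + t • w ∈ poly u v I J K := by
      intro t ht
      refine ⟨fun i hi => ?_, fun j hj => ?_, fun k hk => ?_⟩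
      · rw [inner_add_right, real_inner_smul_right, h1 i hi, hx0.1 i hi]; ring
      · rw [inner_add_right, real_inner_smul_right]
        have := mul_nonpos_of_nonneg_of_nonpos ht (h2 j hj)
        linarith [hx0.2.1 j hj]
      · rw [inner_add_right, real_inner_smul_right]
        have := mul_nonneg ht (h3 k hk)
        linarith [hx0.2.2 k hk]
    obtain ⟨C, hC⟩ := isBounded_iff_forall_norm_le.1 hbdd
    have hwn : 0 < ‖w‖ := norm_pos_iff.2 hw
    set t : ℝ := (C + ‖x0‖ + 1) / ‖w‖ with htdef
    have hC0 : 0 ≤ C := le_trans (norm_nonneg x0) (hC x0 hx0)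
    have ht : 0 ≤ t := by positivity
    have hle := hC _ (hmem t ht)
    have htn : ‖t • w‖ = C + ‖x0‖ + 1 := by
      rw [norm_smul, Real.norm_eq_abs, abs_of_nonneg ht, htdef, div_mul_cancel₀ _ hwn.ne']
    have : ‖t • w‖ ≤ ‖x0 + t • w‖ + ‖x0‖ := by
      calc ‖t • w‖ = ‖(x0 + t • w) - x0‖ := by congr 1; abel
        _ ≤ ‖x0 + t • w‖ + ‖x0‖ := norm_sub_le _ _
    linarith
  · intro hrec
    by_contra hbdd
    rw [isBounded_iff_forall_norm_le] at hbdd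
    push_neg at hbdd
    have hseq : ∀ k : ℕ, ∃ x ∈ poly u v I J K, (k : ℝ) < ‖x‖ := fun k => hbdd k
    choose xs hxs hxn using hseq
    have hxpos : ∀ k : ℕ, 0 < ‖xs k‖ := fun k =>
      lt_of_le_of_lt (Nat.cast_nonneg k) (hxn k)
    set ys : ℕ → Euc n := fun k => ‖xs k‖⁻¹ • xs k with hys
    have hysmem : ∀ k, ys k ∈ Metric.sphere (0 : Euc n) 1 := by
      intro k
      rw [mem_sphere_zero_iff_norm, hys]
      rw [norm_smul, norm_inv, norm_norm, inv_mul_cancel₀ (hxpos k).ne']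
    obtain ⟨w, hwsph, φ, hφ, htend⟩ :=
      (isCompact_sphere (0 : Euc n) 1).tendsto_subseq hysmem
    have hw1 : ‖w‖ = 1 := mem_sphere_zero_iff_norm.1 hwsph
    have hwne : w ≠ 0 := fun h => by rw [h, norm_zero] at hw1; exact one_ne_zero hw1.symm
    -- norms along the subsequence tend to infinity
    have hnormtop : Tendsto (fun k => ‖xs (φ k)‖) atTop atTop := by
      apply tendsto_atTop_mono (fun k => (le_trans (Nat.cast_le.2 (hφ.le_apply)) (hxn (φ k)).le))
      exact tendsto_natCast_atTop_atTop
    have hinv : Tendsto (fun k => ‖xs (φ k)‖⁻¹) atTop (𝓝 0) :=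
      hnormtop.inv_tendsto_atTop
    have hui : ∀ i : Fin m, Tendsto (fun k => ⟪u i, ys (φ k)⟫) atTop (𝓝 ⟪u i, w⟫) := by
      intro i
      exact Filter.Tendsto.inner tendsto_const_nhds htend
    have hform : ∀ i k, ⟪u i, ys (φ k)⟫ = ‖xs (φ k)‖⁻¹ * ⟪u i, xs (φ k)⟫ := by
      intro i k
      rw [hys, real_inner_smul_right]
    refine hwne (hrec w ?_ ?_ ?_)
    · intro i hi
      have heq : (fun k => ⟪u i, ys (φ k)⟫) = fun k => ‖xs (φ k)‖⁻¹ * v i := by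
        funext k; rw [hform, (hxs (φ k)).1 i hi]
      have h0 : Tendsto (fun k => ‖xs (φ k)‖⁻¹ * v i) atTop (𝓝 0) := by
        simpa using hinv.mul_const (v i)
      exact tendsto_nhds_unique (hui i) (heq ▸ h0)
    · intro j hj
      have hle : ∀ k, ⟪u j, ys (φ k)⟫ ≤ ‖xs (φ k)‖⁻¹ * v j := by
        intro k
        rw [hform]
        exact mul_le_mul_of_nonneg_left ((hxs (φ k)).2.1 j hj) (inv_nonneg.2 (hxpos _).le)
      have h0 : Tendsto (fun k => ‖xs (φ k)‖⁻¹ * v j) atTop (𝓝 0) := by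
        simpa using hinv.mul_const (v j)
      exact le_of_tendsto_of_tendsto' (hui j) h0 hle
    · intro k hk
      have hle : ∀ l, ‖xs (φ l)‖⁻¹ * v k ≤ ⟪u k, ys (φ l)⟫ := by
        intro l
        rw [hform]
        exact mul_le_mul_of_nonneg_left ((hxs (φ l)).2.2 k hk) (inv_nonneg.2 (hxpos _).le)
      have h0 : Tendsto (fun l => ‖xs (φ l)‖⁻¹ * v k) atTop (𝓝 0) := by
        simpa using hinv.mul_const (v k)
      exact le_of_tendsto_of_tendsto' h0 (hui k) hle

end Bounded

end AuxPoly

theorem nonempty_and_bounded_iff_of_memMinFace {n m : ℕ} (hn : 1 ≤ n) (hm : 1 ≤ m)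
    (u : Fin m → Euc n) (hu : ∀ i, u i ≠ 0)
    (a b : Fin m → ℝ) (hb : MemMinFace u a b)
    (I J K : Set (Fin m)) (hIJK : IsTripartition I J K)
    (hne : (poly u a I J K).Nonempty) :
    (poly u b I J K).Nonempty ∧
      (Bornology.IsBounded (poly u a I J K) ↔ Bornology.IsBounded (poly u b I J K)) := by
  have hdual := AuxPoly.dual_nonneg u hb hIJK hne.choose_spec
  have hbne : (poly u b I J K).Nonempty := AuxPoly.farkas_primal u b hIJK hdual
  refine ⟨hbne, ?_⟩
  rw [AuxPoly.bounded_iff_rec u a I J K hne, AuxPoly.bounded_iff_rec u b I J K hbne]
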